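/- For odd n ≥ 3, the Möbius ladder M_n is non-planar. -/

import Mathlib

/-- `H` is a minor of `G`: branch sets witness. -/
def IsMinorOf {α β : Type*} (H : SimpleGraph α) (G : SimpleGraph β) : Prop :=
  ∃ f : α → Set β,
    (∀ a, (f a).Nonempty) ∧
    (∀ a, (G.induce (f a)).Connected) ∧
    (Pairwise fun a b => Disjoint (f a) (f b)) ∧
    (∀ a b, H.Adj a b → ∃ u ∈ f a, ∃ v ∈ f b, G.Adj u v)

/-- Planarity, via Wagner's characterization: no `K₅` and no `K₃,₃` minor. -/
def GraphIsPlanar {β : Type*} (G : SimpleGraph β) : Prop :=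
  ¬ IsMinorOf (SimpleGraph.completeGraph (Fin 5)) G ∧
  ¬ IsMinorOf (completeBipartiteGraph (Fin 3) (Fin 3)) G

/-- The Möbius ladder `Mₙ`: a cycle of length `2n` together with the `n` chords
joining opposite vertices. -/
def mobiusLadder (n : ℕ) : SimpleGraph (ZMod (2 * n)) :=
  SimpleGraph.fromRel (fun i j => j = i + 1 ∨ j = i + (n : ZMod (2 * n)))

namespace MobiusAux

lemma castInj (n : ℕ) {a b : ℕ} (ha : a < 2*n) (hb : b < 2*n)
    (h : (a : ZMod (2*n)) = b) : a = b := by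
  have := (ZMod.natCast_eq_natCast_iff a b (2*n)).mp h
  rwa [Nat.ModEq, Nat.mod_eq_of_lt ha, Nat.mod_eq_of_lt hb] at this

lemma adj_succ (n : ℕ) {k : ℕ} (hk : k + 1 < 2*n) :
    (mobiusLadder n).Adj (k : ZMod (2*n)) ((k+1 : ℕ) : ZMod (2*n)) := by
  rw [mobiusLadder, SimpleGraph.fromRel_adj]
  refine ⟨fun h => ?_, Or.inl (Or.inl ?_)⟩
  · have := castInj n (by omega) hk h; omega
  · push_cast; ring

lemma adj_chord (n : ℕ) {k : ℕ} (hk : k + n < 2*n) :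
    (mobiusLadder n).Adj (k : ZMod (2*n)) ((k+n : ℕ) : ZMod (2*n)) := by
  rw [mobiusLadder, SimpleGraph.fromRel_adj]
  refine ⟨fun h => ?_, Or.inl (Or.inr ?_)⟩
  · have := castInj n (by omega) hk h; omega
  · push_cast; ring

lemma adj_wrap (n : ℕ) (hn : 3 ≤ n) :
    (mobiusLadder n).Adj ((0 : ℕ) : ZMod (2*n)) ((2*n-1 : ℕ) : ZMod (2*n)) := by
  rw [mobiusLadder, SimpleGraph.fromRel_adj]
  refine ⟨fun h => ?_, Or.inr (Or.inl ?_)⟩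
  · have := castInj n (by omega) (by omega) h; omega
  · have h1 : ((2*n-1 : ℕ) : ZMod (2*n)) + 1 = ((2*n-1+1 : ℕ) : ZMod (2*n)) := by
      push_cast; ring
    rw [h1, show 2*n-1+1 = 2*n from by omega, ZMod.natCast_self, Nat.cast_zero]

lemma icc_connected (n : ℕ) {a b : ℕ} (hab : a ≤ b) (hb : b < 2*n) :
    ((mobiusLadder n).induce ((fun k : ℕ => (k : ZMod (2*n))) '' Set.Icc a b)).Connected := by
  set S := (fun k : ℕ => (k : ZMod (2*n))) '' Set.Icc a b with hS
  have hmem : ∀ k, a ≤ k → k ≤ b → (k : ZMod (2*n)) ∈ S :=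
    fun k h1 h2 => ⟨k, Set.mem_Icc.mpr ⟨h1, h2⟩, rfl⟩
  have key : ∀ k (h1 : a ≤ k) (h2 : k ≤ b),
      ((mobiusLadder n).induce S).Reachable ⟨(a : ZMod (2*n)), hmem a le_rfl hab⟩
        ⟨(k : ZMod (2*n)), hmem k h1 h2⟩ := by
    intro k h1
    induction k, h1 using Nat.le_induction with
    | base => intro _; exact SimpleGraph.Reachable.refl _
    | succ k hk ih =>
      intro h2
      refine (ih (by omega)).trans (SimpleGraph.Adj.reachable ?_)
      show (mobiusLadder n).Adj _ _
      exact adj_succ n (by omega)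
  rw [SimpleGraph.connected_iff]
  refine ⟨fun u v => ?_, ⟨⟨(a : ZMod (2*n)), hmem a le_rfl hab⟩⟩⟩
  obtain ⟨x, hx⟩ := u
  obtain ⟨k, hk, rfl⟩ := hx
  obtain ⟨y, hy⟩ := v
  obtain ⟨l, hl, rfl⟩ := hy
  simp only [Set.mem_Icc] at hk hl
  exact (key k hk.1 hk.2).symm.trans (key l hl.1 hl.2)

lemma icc_disj (n : ℕ) {a b c d : ℕ} (h : b < c ∨ d < a) (hb : b < 2*n) (hd : d < 2*n) :
    Disjoint ((fun k : ℕ => (k : ZMod (2*n))) '' Set.Icc a b)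
      ((fun k : ℕ => (k : ZMod (2*n))) '' Set.Icc c d) := by
  rw [Set.disjoint_left]
  rintro x ⟨k, hk, rfl⟩ ⟨l, hl, hlk⟩
  simp only [Set.mem_Icc] at hk hl
  have := castInj n (by omega) (by omega) hlk
  omega

end MobiusAux

/-- For odd `n ≥ 3`, the Möbius ladder `Mₙ` is non-planar. -/
theorem stmt8 (n : ℕ) (hn : 3 ≤ n) (hodd : Odd n) :
    ¬ GraphIsPlanar (mobiusLadder n) := by
  open MobiusAux in
  rintro ⟨-, hK33⟩
  apply hK33
  set F : Fin 3 ⊕ Fin 3 → Set (ZMod (2*n)) :=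
    Sum.elim ![(fun k : ℕ => (k : ZMod (2*n))) '' Set.Icc 0 0,
               (fun k : ℕ => (k : ZMod (2*n))) '' Set.Icc 2 (n-1),
               (fun k : ℕ => (k : ZMod (2*n))) '' Set.Icc (n+1) (n+1)]
             ![(fun k : ℕ => (k : ZMod (2*n))) '' Set.Icc 1 1,
               (fun k : ℕ => (k : ZMod (2*n))) '' Set.Icc n n,
               (fun k : ℕ => (k : ZMod (2*n))) '' Set.Icc (n+2) (2*n-1)] with hF
  refine ⟨F, ?_, ?_, ?_, ?_⟩
  · rintro (a | a) <;> fin_cases a <;>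
      simp only [hF, Sum.elim_inl, Sum.elim_inr, Matrix.cons_val_zero, Matrix.cons_val_one,
        Matrix.head_cons, Matrix.cons_val_two, Matrix.tail_cons] <;>
      exact ⟨_, ⟨_, Set.mem_Icc.mpr ⟨le_rfl, by omega⟩, rfl⟩⟩
  · rintro (a | a) <;> fin_cases a <;>
      simp only [hF, Sum.elim_inl, Sum.elim_inr, Matrix.cons_val_zero, Matrix.cons_val_one,
        Matrix.head_cons, Matrix.cons_val_two, Matrix.tail_cons] <;>
      exact icc_connected n (by omega) (by omega)
  · rintro (a | a) (b | b) hab <;> fin_cases a <;> fin_cases b <;>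
      simp only [hF, Sum.elim_inl, Sum.elim_inr, Matrix.cons_val_zero, Matrix.cons_val_one,
        Matrix.head_cons, Matrix.cons_val_two, Matrix.tail_cons] <;>
      first
        | exact absurd rfl hab
        | exact icc_disj n (by omega) (by omega) (by omega)
  · have main : ∀ a b : Fin 3,
        ∃ u ∈ F (Sum.inl a), ∃ v ∈ F (Sum.inr b), (mobiusLadder n).Adj u v := by
      intro a b
      fin_cases a <;> fin_cases b <;>
        simp only [hF, Sum.elim_inl, Sum.elim_inr, Matrix.cons_val_zero, Matrix.cons_val_one,
          Matrix.head_cons, Matrix.cons_val_two, Matrix.tail_cons]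
      · refine ⟨((0:ℕ) : ZMod (2*n)), ⟨0, by simp, rfl⟩, ((1:ℕ) : ZMod (2*n)), ⟨1, by simp, rfl⟩, ?_⟩
        have h := adj_succ n (k := 0) (by omega)
        rwa [show (0:ℕ)+1 = 1 from rfl] at h
      · refine ⟨((0:ℕ) : ZMod (2*n)), ⟨0, by simp, rfl⟩, ((n:ℕ) : ZMod (2*n)), ⟨n, by simp, rfl⟩, ?_⟩
        have h := adj_chord n (k := 0) (by omega)
        rwa [show (0:ℕ)+n = n from by omega] at h
      · exact ⟨((0:ℕ) : ZMod (2*n)), ⟨0, by simp, rfl⟩,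
          ((2*n-1 : ℕ) : ZMod (2*n)), ⟨2*n-1, Set.mem_Icc.mpr ⟨by omega, le_rfl⟩, rfl⟩,
          adj_wrap n hn⟩
      · refine ⟨((2:ℕ) : ZMod (2*n)), ⟨2, Set.mem_Icc.mpr ⟨le_rfl, by omega⟩, rfl⟩,
          ((1:ℕ) : ZMod (2*n)), ⟨1, by simp, rfl⟩, ?_⟩
        have h := adj_succ n (k := 1) (by omega)
        rw [show (1:ℕ)+1 = 2 from rfl] at h
        exact h.symm
      · refine ⟨((n-1:ℕ) : ZMod (2*n)), ⟨n-1, Set.mem_Icc.mpr ⟨by omega, le_rfl⟩, rfl⟩,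
          ((n:ℕ) : ZMod (2*n)), ⟨n, by simp, rfl⟩, ?_⟩
        have h := adj_succ n (k := n-1) (by omega)
        rwa [show n-1+1 = n from by omega] at h
      · refine ⟨((2:ℕ) : ZMod (2*n)), ⟨2, Set.mem_Icc.mpr ⟨le_rfl, by omega⟩, rfl⟩,
          ((n+2:ℕ) : ZMod (2*n)), ⟨n+2, Set.mem_Icc.mpr ⟨le_rfl, by omega⟩, rfl⟩, ?_⟩
        have h := adj_chord n (k := 2) (by omega)
        rwa [show 2+n = n+2 from by omega] at h
      · refine ⟨((n+1:ℕ) : ZMod (2*n)), ⟨n+1, by simp, rfl⟩,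
          ((1:ℕ) : ZMod (2*n)), ⟨1, by simp, rfl⟩, ?_⟩
        have h := adj_chord n (k := 1) (by omega)
        rw [show 1+n = n+1 from by omega] at h
        exact h.symm
      · refine ⟨((n+1:ℕ) : ZMod (2*n)), ⟨n+1, by simp, rfl⟩,
          ((n:ℕ) : ZMod (2*n)), ⟨n, by simp, rfl⟩, ?_⟩
        exact (adj_succ n (k := n) (by omega)).symm
      · refine ⟨((n+1:ℕ) : ZMod (2*n)), ⟨n+1, by simp, rfl⟩,
          ((n+2:ℕ) : ZMod (2*n)), ⟨n+2, Set.mem_Icc.mpr ⟨le_rfl, by omega⟩, rfl⟩, ?_⟩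
        exact adj_succ n (k := n+1) (by omega)
    rintro (a | a) (b | b) hadj <;> simp at hadj
    · exact main a b
    · obtain ⟨u, hu, v, hv, h⟩ := main b a
      exact ⟨v, hv, u, hu, h.symm⟩
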